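/- Let f : M → N be a smooth map between Kähler manifolds and define the 2-tensor Ψ_f = (1/2)[(df∘J) ⊙ (df∘J) − df ⊙ df], where (α ⊙ β)(X,Y) = ⟨α(X), β(Y)⟩. Then for any two (1,0)-vectors Z, W on M, Ψ_f(Z, W̄) = 0; that is, Ψ_f has no (1,1)-component, and consequently S_f^{(1,1)} = S_σ + S_τ, where S_f, S_σ, S_τ are the stress-energy tensors of df, σ, τ respectively. -/

import Mathlib

open scoped InnerProductSpace

/-- computation (2.16)–(2.17), pointwise form: for a linear map
`F = df` between real inner product spaces with orthogonal complex structures,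
the tensor `Ψ(X,Y) = (1/2)[⟪F(JX),F(JY)⟫ - ⟪FX,FY⟫]` has vanishing
(1,1)-component, i.e. `Ψ(X,Y) + Ψ(JX,JY) = 0`, and consequently the
(1,1)-part of the stress-energy tensor `S_f` equals `S_σ + S_τ`, where the
Hilbert–Schmidt norms are computed over the orthonormal frame `{e i, J e i}`. -/
theorem stmt18 {V W : Type*} [NormedAddCommGroup V] [InnerProductSpace ℝ V]
    [NormedAddCommGroup W] [InnerProductSpace ℝ W]
    (m : ℕ) (J : V →ₗ[ℝ] V) (J' : W →ₗ[ℝ] W)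
    (hJ2 : ∀ x, J (J x) = -x) (hJ'2 : ∀ w, J' (J' w) = -w)
    (hJiso : ∀ x y : V, ⟪J x, J y⟫_ℝ = ⟪x, y⟫_ℝ)
    (hJ'iso : ∀ x y : W, ⟪J' x, J' y⟫_ℝ = ⟪x, y⟫_ℝ)
    (e : ℕ → V)
    (horth : ∀ i < m, ∀ j < m, ⟪e i, e j⟫_ℝ = if i = j then 1 else 0)
    (horthJ : ∀ i < m, ∀ j < m, ⟪e i, J (e j)⟫_ℝ = 0)
    (F : V →ₗ[ℝ] W) (σ τ : V → W)
    (hσ : ∀ X, σ X = (1/2 : ℝ) • (F X + J' (F (J X))))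
    (hτ : ∀ X, τ X = (1/2 : ℝ) • (F X - J' (F (J X))))
    (Ψ : V → V → ℝ)
    (hΨ : ∀ X Y, Ψ X Y = (1/2) * (⟪F (J X), F (J Y)⟫_ℝ - ⟪F X, F Y⟫_ℝ))
    (nF nσ nτ : ℝ)
    (hnF : nF = ∑ i ∈ Finset.range m, (‖F (e i)‖^2 + ‖F (J (e i))‖^2))
    (hnσ : nσ = ∑ i ∈ Finset.range m, (‖σ (e i)‖^2 + ‖σ (J (e i))‖^2))
    (hnτ : nτ = ∑ i ∈ Finset.range m, (‖τ (e i)‖^2 + ‖τ (J (e i))‖^2))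
    (Sf Sσ Sτ : V → V → ℝ)
    (hSf : ∀ X Y, Sf X Y = nF / 2 * ⟪X, Y⟫_ℝ - ⟪F X, F Y⟫_ℝ)
    (hSσ : ∀ X Y, Sσ X Y = nσ / 2 * ⟪X, Y⟫_ℝ - ⟪σ X, σ Y⟫_ℝ)
    (hSτ : ∀ X Y, Sτ X Y = nτ / 2 * ⟪X, Y⟫_ℝ - ⟪τ X, τ Y⟫_ℝ) :
    (∀ X Y, Ψ X Y + Ψ (J X) (J Y) = 0) ∧
    (∀ X Y, (Sf X Y + Sf (J X) (J Y)) / 2 = Sσ X Y + Sτ X Y) := by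
  have key : ∀ X Y, ⟪σ X, σ Y⟫_ℝ + ⟪τ X, τ Y⟫_ℝ
      = (1/2) * (⟪F X, F Y⟫_ℝ + ⟪F (J X), F (J Y)⟫_ℝ) := by
    intro X Y
    rw [hσ, hσ, hτ, hτ]
    simp only [real_inner_smul_left, real_inner_smul_right, inner_add_left,
      inner_add_right, inner_sub_left, inner_sub_right, hJ'iso]
    ring
  have hnorm : ∀ X, ‖σ X‖^2 + ‖τ X‖^2 = (1/2) * (‖F X‖^2 + ‖F (J X)‖^2) := by
    intro X
    have := key X X
    simpa only [real_inner_self_eq_norm_sq] using this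
  have hsum : nσ + nτ = nF := by
    rw [hnσ, hnτ, hnF, ← Finset.sum_add_distrib]
    apply Finset.sum_congr rfl
    intro i _
    have h1 := hnorm (e i)
    have h2 := hnorm (J (e i))
    have h3 : F (J (J (e i))) = -F (e i) := by rw [hJ2]; simp
    rw [h3] at h2
    simp only [norm_neg] at h2
    nlinarith [h1, h2]
  constructor
  · intro X Y
    rw [hΨ, hΨ, hJ2, hJ2]
    simp only [map_neg, inner_neg_neg]
    ring
  · intro X Y
    have k := key X Y
    rw [hSf, hSf, hSσ, hSτ, hJiso, ← hsum]
    linarith
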